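/- Let R be an integral domain, g(t) ∈ R[t] monic of degree n, and f(t) ∈ R[t]. Then the rank of f(C_g) (over the fraction field of R) equals n minus the degree of the monic greatest common divisor of f(t) and g(t) computed over the fraction field; equivalently, it equals the number of roots of g (with multiplicity, in an algebraic closure) that are not roots of f. -/

import Mathlib

open Polynomial Matrix

def companion {R : Type*} [CommRing R] (g : R[X]) :
    Matrix (Fin g.natDegree) (Fin g.natDegree) R :=
  Matrix.of fun i j =>
    if (i : ℕ) = 0 then -g.coeff (g.natDegree - 1 - (j : ℕ))
    else if (i : ℕ) = (j : ℕ) + 1 then 1 else 0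

private lemma transpose_aeval {S : Type*} [CommRing S] {n : ℕ}
    (M : Matrix (Fin n) (Fin n) S) (p : S[X]) :
    (Polynomial.aeval M p)ᵀ = Polynomial.aeval Mᵀ p := by
  induction p using Polynomial.induction_on' with
  | add p q hp hq => simp [hp, hq]
  | monomial k a =>
      simp only [aeval_monomial, Matrix.transpose_mul, Matrix.transpose_pow,
        Algebra.algebraMap_eq_smul_one, Matrix.transpose_smul, Matrix.transpose_one,
        smul_mul_assoc, mul_smul_comm, mul_one, one_mul]

private lemma auxmod {K : Type*} [Field K] [DecidableEq K[X]] (G F : K[X]) (hG : G.Monic) :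
    Module.finrank K (LinearMap.range ((Algebra.lmul K (AdjoinRoot G)) (AdjoinRoot.mk G F)))
      = G.natDegree - (EuclideanDomain.gcd F G).natDegree := by
  have hG0 : G ≠ 0 := hG.ne_zero
  set A := AdjoinRoot G with hA
  have lmul_apply : ∀ a x : A, (Algebra.lmul K A) a x = a * x := fun a x => rfl
  set D₀ := EuclideanDomain.gcd F G with hD₀def
  have hD₀0 : D₀ ≠ 0 := fun h => hG0 ((EuclideanDomain.gcd_eq_zero_iff).1 h).2
  set u : K := (D₀.leadingCoeff)⁻¹ with hu_def
  have hu : u ≠ 0 := inv_ne_zero (Polynomial.leadingCoeff_ne_zero.2 hD₀0)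
  obtain ⟨D, hDdef⟩ : ∃ D, D = D₀ * Polynomial.C u := ⟨_, rfl⟩
  have hDm : D.Monic := hDdef ▸ Polynomial.monic_mul_leadingCoeff_inv hD₀0
  have hD0 : D ≠ 0 := hDm.ne_zero
  have hassoc : Associated D₀ D := by
    refine ⟨(Polynomial.isUnit_C.2 (isUnit_iff_ne_zero.2 hu)).unit, hDdef.symm⟩
  have hDdvdG : D ∣ G := hassoc.symm.dvd.trans (EuclideanDomain.gcd_dvd_right F G)
  have hDdvdF : D ∣ F := hassoc.symm.dvd.trans (EuclideanDomain.gcd_dvd_left F G)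
  set E := G / D with hEdef
  have hDE : D * E = G := EuclideanDomain.mul_div_cancel' hD0 hDdvdG
  have hEm : E.Monic := hDm.of_mul_monic_left (by rw [hDE]; exact hG)
  have hE0 : E ≠ 0 := hEm.ne_zero
  -- range equality
  have hrange : LinearMap.range ((Algebra.lmul K A) (AdjoinRoot.mk G F))
      = LinearMap.range ((Algebra.lmul K A) (AdjoinRoot.mk G D)) := by
    apply le_antisymm
    · rintro x ⟨y, rfl⟩
      obtain ⟨c, hc⟩ := hDdvdF
      refine ⟨AdjoinRoot.mk G c * y, ?_⟩
      rw [lmul_apply, lmul_apply, hc, _root_.map_mul (AdjoinRoot.mk G) D c]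
      exact (mul_assoc _ _ _).symm
    · rintro x ⟨y, rfl⟩
      refine ⟨AdjoinRoot.mk G (EuclideanDomain.gcdA F G * Polynomial.C u) * y, ?_⟩
      rw [lmul_apply, lmul_apply]
      have hbez : D = F * (EuclideanDomain.gcdA F G * Polynomial.C u)
          + G * (EuclideanDomain.gcdB F G * Polynomial.C u) := by
        rw [hDdef, hD₀def, EuclideanDomain.gcd_eq_gcd_ab F G]; ring
      have hmk : AdjoinRoot.mk G D
          = AdjoinRoot.mk G F * AdjoinRoot.mk G (EuclideanDomain.gcdA F G * Polynomial.C u) := by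
        conv_lhs => rw [hbez]
        rw [map_add, _root_.map_mul, _root_.map_mul (AdjoinRoot.mk G) G,
          AdjoinRoot.mk_self, zero_mul, add_zero]
      rw [hmk]; ring
  rw [hrange]
  -- the injection from AdjoinRoot E
  set ψ : AdjoinRoot E →ₗ[K] A :=
    ((Algebra.lmul K A) (AdjoinRoot.mk G D) ∘ₗ
      (Polynomial.aeval (AdjoinRoot.root G)).toLinearMap) ∘ₗ (AdjoinRoot.modByMonicHom hEm)
    with hψdef
  have hψ_mk : ∀ p : K[X], ψ (AdjoinRoot.mk E p) = AdjoinRoot.mk G (D * (p %ₘ E)) := by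
    intro p
    show (Algebra.lmul K A) (AdjoinRoot.mk G D)
        ((Polynomial.aeval (AdjoinRoot.root G)) ((AdjoinRoot.modByMonicHom hEm) (AdjoinRoot.mk E p))) = _
    rw [AdjoinRoot.modByMonicHom_mk, AdjoinRoot.aeval_eq, lmul_apply, ← _root_.map_mul]
  have hψr : LinearMap.range ψ = LinearMap.range ((Algebra.lmul K A) (AdjoinRoot.mk G D)) := by
    apply le_antisymm
    · rintro x ⟨y, rfl⟩
      induction y using AdjoinRoot.induction_on with
      | ih p =>
        refine ⟨AdjoinRoot.mk G (p %ₘ E), ?_⟩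
        rw [lmul_apply, ← _root_.map_mul, hψ_mk]
    · rintro x ⟨y, rfl⟩
      induction y using AdjoinRoot.induction_on with
      | ih p =>
        refine ⟨AdjoinRoot.mk E p, ?_⟩
        rw [hψ_mk, lmul_apply, ← _root_.map_mul, AdjoinRoot.mk_eq_mk]
        have hp := Polynomial.modByMonic_add_div p E
        have hsub : D * (p %ₘ E) - D * p = -(G * (p /ₘ E)) := by
          rw [← hDE]; linear_combination D * hp
        rw [hsub]
        exact (dvd_neg).2 (dvd_mul_right _ _)
  rw [← hψr]
  have hψinj : Function.Injective ψ := by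
    rw [← LinearMap.ker_eq_bot]
    apply (Submodule.eq_bot_iff _).2
    intro x hx
    induction x using AdjoinRoot.induction_on with
    | ih p =>
      have h0 : AdjoinRoot.mk G (D * (p %ₘ E)) = 0 := by rw [← hψ_mk]; exact hx
      rw [AdjoinRoot.mk_eq_zero] at h0
      obtain ⟨c, hc⟩ := h0
      rw [← hDE, mul_assoc] at hc
      have hc' : p %ₘ E = E * c := mul_left_cancel₀ hD0 hc
      have hmod : p %ₘ E = 0 := by
        by_contra hne
        have h1 : E.degree ≤ (p %ₘ E).degree :=
          Polynomial.degree_le_of_dvd ⟨c, hc'⟩ hne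
        exact absurd (Polynomial.degree_modByMonic_lt p hEm) (not_lt.2 h1)
      rw [AdjoinRoot.mk_eq_zero]
      exact (Polynomial.modByMonic_eq_zero_iff_dvd hEm).1 hmod
  rw [LinearMap.finrank_range_of_inj hψinj]
  have hfr : Module.finrank K (AdjoinRoot E) = E.natDegree := by
    rw [Module.finrank_eq_card_basis (AdjoinRoot.powerBasisAux' hEm), Fintype.card_fin]
  rw [hfr]
  have hdeg : G.natDegree = D.natDegree + E.natDegree := by
    rw [← hDE, Polynomial.natDegree_mul hD0 hE0]
  have hDdeg : D.natDegree = D₀.natDegree := by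
    rw [hDdef, Polynomial.natDegree_mul hD₀0 (fun h => hu (Polynomial.C_eq_zero.1 h)),
      Polynomial.natDegree_C, add_zero]
  omega

private lemma auxrank {K : Type*} [Field K] [DecidableEq K[X]] (G F : K[X]) (hG : G.Monic)
    (M : Matrix (Fin G.natDegree) (Fin G.natDegree) K)
    (hM : ∀ i j, M i j = if (i : ℕ) = 0 then -G.coeff (G.natDegree - 1 - (j : ℕ))
      else if (i : ℕ) = (j : ℕ) + 1 then 1 else 0) :
    (Polynomial.aeval M F).rank = G.natDegree - (EuclideanDomain.gcd F G).natDegree := by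
  classical
  set A := AdjoinRoot G with hA
  set pb : PowerBasis K A := AdjoinRoot.powerBasis' hG with hpb
  let b : Module.Basis (Fin G.natDegree) K A := pb.basis.reindex (Fin.revPerm)
  have hb : ∀ j : Fin G.natDegree, b j = AdjoinRoot.root G ^ (G.natDegree - 1 - (j : ℕ)) := by
    intro j
    have h1 : b j = pb.basis (Fin.revPerm.symm j) := Module.Basis.reindex_apply _ _ _
    rw [h1, pb.basis_eq_pow]
    have hgen : pb.gen = AdjoinRoot.root G := by simp [hpb]
    rw [hgen]
    congr 1
    rw [Fin.revPerm_symm]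
    show ((Fin.rev j : Fin G.natDegree) : ℕ) = _
    rw [Fin.val_rev]
    omega
  have hpow : AdjoinRoot.root G ^ G.natDegree
      = ∑ i : Fin G.natDegree,
          (-G.coeff (G.natDegree - 1 - (i : ℕ))) • AdjoinRoot.root G ^ (G.natDegree - 1 - (i : ℕ)) := by
    have h0 : (Polynomial.aeval (AdjoinRoot.root G)) G = 0 := by
      rw [AdjoinRoot.aeval_eq, AdjoinRoot.mk_self]
    rw [Polynomial.aeval_eq_sum_range, Finset.sum_range_succ, hG.coeff_natDegree, one_smul] at h0
    calc AdjoinRoot.root G ^ G.natDegree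
        = -∑ i ∈ Finset.range G.natDegree, G.coeff i • AdjoinRoot.root G ^ i :=
          eq_neg_of_add_eq_zero_right h0
      _ = -∑ i ∈ Finset.range G.natDegree,
            (fun k => G.coeff k • AdjoinRoot.root G ^ k) (G.natDegree - 1 - i) := by
          rw [Finset.sum_range_reflect (fun k => G.coeff k • AdjoinRoot.root G ^ k) G.natDegree]
      _ = ∑ i ∈ Finset.range G.natDegree,
            (-G.coeff (G.natDegree - 1 - i)) • AdjoinRoot.root G ^ (G.natDegree - 1 - i) := by
          rw [← Finset.sum_neg_distrib]
          exact Finset.sum_congr rfl (fun i _ => (neg_smul _ _).symm)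
      _ = ∑ i : Fin G.natDegree,
            (-G.coeff (G.natDegree - 1 - (i : ℕ))) • AdjoinRoot.root G ^ (G.natDegree - 1 - (i : ℕ)) :=
          (Fin.sum_univ_eq_sum_range
            (fun k => (-G.coeff (G.natDegree - 1 - k)) • AdjoinRoot.root G ^ (G.natDegree - 1 - k))
            G.natDegree).symm
  have hrhs : ∀ x : A, (Algebra.lmul K A) (AdjoinRoot.root G) x = AdjoinRoot.root G * x :=
    fun x => rfl
  have hX : Matrix.toLin b b Mᵀ = (Algebra.lmul K A) (AdjoinRoot.root G) := by
    apply b.ext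
    intro j
    rw [Matrix.toLin_self, hrhs]
    by_cases hj : (j : ℕ) = 0
    · have hterm : ∀ i : Fin G.natDegree, Mᵀ i j • b i
          = (-G.coeff (G.natDegree - 1 - (i : ℕ))) • AdjoinRoot.root G ^ (G.natDegree - 1 - (i : ℕ)) := by
        intro i
        rw [Matrix.transpose_apply, hM, if_pos hj, hb]
      rw [Finset.sum_congr rfl (fun i _ => hterm i), ← hpow, hb, hj]
      rw [← pow_succ']
      congr 1
      have := j.pos
      omega
    · have hjlt := j.isLt
      set i0 : Fin G.natDegree := ⟨(j : ℕ) - 1, by omega⟩ with hi0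
      rw [Finset.sum_eq_single i0]
      · rw [Matrix.transpose_apply, hM, if_neg hj, if_pos (by simp [hi0]; omega), one_smul,
          hb, hb, ← pow_succ']
        congr 1
        simp only [hi0]
        omega
      · intro i _ hi
        rw [Matrix.transpose_apply, hM, if_neg hj, if_neg, zero_smul]
        intro hc
        apply hi
        apply Fin.ext
        simp only [hi0]
        omega
      · intro h
        exact absurd (Finset.mem_univ i0) h
  have h1 : (Matrix.toLinAlgEquiv b) (Polynomial.aeval Mᵀ F)
      = (Algebra.lmul K A) (AdjoinRoot.mk G F) := by
    rw [← Polynomial.aeval_algHom_apply (Matrix.toLinAlgEquiv b) Mᵀ F]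
    have : (Matrix.toLinAlgEquiv b) Mᵀ = (Algebra.lmul K A) (AdjoinRoot.root G) := hX
    rw [this, Polynomial.aeval_algHom_apply (Algebra.lmul K A) (AdjoinRoot.root G) F,
      AdjoinRoot.aeval_eq]
  have h2 : (Polynomial.aeval M F).rank = (Polynomial.aeval Mᵀ F).rank := by
    rw [← transpose_aeval, Matrix.rank_transpose]
  rw [h2, Matrix.rank_eq_finrank_range_toLin (Polynomial.aeval Mᵀ F) b b]
  have h3 : Matrix.toLin b b (Polynomial.aeval Mᵀ F)
      = (Algebra.lmul K A) (AdjoinRoot.mk G F) := h1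
  rw [h3]
  exact auxmod G F hG

theorem stmt19 {R : Type*} [CommRing R] [IsDomain R] (g f : R[X]) (hg : g.Monic) :
    letI K := FractionRing R
    letI φ : R →+* K := algebraMap R K
    haveI : DecidableEq (Polynomial K) := Classical.decEq _
    ((Polynomial.aeval (companion g) f).map φ).rank =
      g.natDegree - (EuclideanDomain.gcd (f.map φ) (g.map φ)).natDegree := by
  set K := FractionRing R
  set φ : R →+* K := algebraMap R K with hφ
  letI : DecidableEq (Polynomial K) := Classical.decEq _
  set G := g.map φ with hGdef
  have hGm : G.Monic := hg.map φ
  have hn : G.natDegree = g.natDegree := hg.natDegree_map φ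
  -- step 1: commute map with aeval
  have hmap : (Polynomial.aeval (companion g) f).map φ
      = Polynomial.aeval ((companion g).map φ) (f.map φ) := by
    show φ.mapMatrix (Polynomial.aeval (companion g) f) = _
    rw [Polynomial.aeval_def, Polynomial.hom_eval₂, Polynomial.aeval_def, Polynomial.eval₂_map]
    congr 1
    ext r i j
    simp [Matrix.algebraMap_matrix_apply, apply_ite φ]
  rw [hmap]
  -- step 2: reindex
  set e : Fin g.natDegree ≃ Fin G.natDegree := finCongr hn.symm with he
  have hre : ((Matrix.reindexAlgEquiv K K e) ((companion g).map φ)) = ((companion g).map φ).submatrix e.symm e.symm := by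
    rw [Matrix.reindexAlgEquiv_apply, Matrix.reindex_apply]
  have hrank : (Polynomial.aeval ((companion g).map φ) (f.map φ)).rank
      = (Polynomial.aeval ((Matrix.reindexAlgEquiv K K e) ((companion g).map φ)) (f.map φ)).rank := by
    rw [Polynomial.aeval_algHom_apply (Matrix.reindexAlgEquiv K K e) ((companion g).map φ) (f.map φ),
      Matrix.reindexAlgEquiv_apply, Matrix.reindex_apply, Matrix.rank_submatrix]
  have hM' : ∀ i j, ((Matrix.reindexAlgEquiv K K e) ((companion g).map φ)) i j
      = if (i : ℕ) = 0 then -G.coeff (G.natDegree - 1 - (j : ℕ))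
        else if (i : ℕ) = (j : ℕ) + 1 then 1 else 0 := by
    intro i j
    rw [hre]
    simp only [Matrix.submatrix_apply, Matrix.map_apply, companion, Matrix.of_apply]
    have hvi : ((e.symm i : Fin g.natDegree) : ℕ) = (i : ℕ) := rfl
    have hvj : ((e.symm j : Fin g.natDegree) : ℕ) = (j : ℕ) := rfl
    rw [hvi, hvj]
    have hcoeff : -G.coeff (G.natDegree - 1 - (j : ℕ)) = φ (-g.coeff (g.natDegree - 1 - (j : ℕ))) := by
      rw [map_neg]
      congr 1
      obtain ⟨k, hk⟩ : ∃ k, k = (j : ℕ) := ⟨_, rfl⟩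
      rw [← hk, hn]
      exact Polynomial.coeff_map φ _
    rw [hcoeff, apply_ite φ, apply_ite φ, _root_.map_one φ, map_zero φ]
  rw [hrank, auxrank G (f.map φ) hGm _ hM', hn]
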